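/- Let Γ₂[2] be the set of matrices M in the integral symplectic group Sp(4,ℤ) (4×4 integer matrices M with MᵀJM = J, where J = [[0,−I₂],[I₂,0]]) that are congruent to the identity matrix modulo 2. Write M in 2×2 blocks as M = [[A,B],[C,D]] and set C·Dᵀ = [[α,β],[β,γ]]. Then α, β, γ are even integers, and the map χ : Γ₂[2] → {±1} defined by χ(M) = (−1)^((α+β+γ)/2) is a group homomorphism. Moreover χ is surjective, so its kernel is a subgroup of index two of Γ₂[2]. -/
import Mathlib

open Matrix
/-- The standard symplectic form matrix `J = [[0, −I₂],[I₂, 0]]`. -/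
def Jmat : Matrix (Fin 4) (Fin 4) ℤ :=
  !![0, 0, -1, 0; 0, 0, 0, -1; 1, 0, 0, 0; 0, 1, 0, 0]

/-- `M ∈ Sp(4,ℤ)`: an integral matrix with `Mᵀ J M = J`. -/
def IsSp4Z (M : Matrix (Fin 4) (Fin 4) ℤ) : Prop :=
  Mᵀ * Jmat * M = Jmat

/-- `M ∈ Γ₂[2]`: symplectic and congruent to the identity modulo 2. -/
def InGamma2Two (M : Matrix (Fin 4) (Fin 4) ℤ) : Prop :=
  IsSp4Z M ∧ ∀ i j, (2 : ℤ) ∣ (M i j - (1 : Matrix (Fin 4) (Fin 4) ℤ) i j)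

/-- The lower-left block `C` of `M = [[A,B],[C,D]]`. -/
def blockC (M : Matrix (Fin 4) (Fin 4) ℤ) : Matrix (Fin 2) (Fin 2) ℤ :=
  Matrix.of fun i j => M ⟨i.1 + 2, by omega⟩ ⟨j.1, by omega⟩

/-- The lower-right block `D` of `M = [[A,B],[C,D]]`. -/
def blockD (M : Matrix (Fin 4) (Fin 4) ℤ) : Matrix (Fin 2) (Fin 2) ℤ :=
  Matrix.of fun i j => M ⟨i.1 + 2, by omega⟩ ⟨j.1 + 2, by omega⟩

/-- `α`, the (0,0) entry of `C·Dᵀ`. -/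
def alphaOf (M : Matrix (Fin 4) (Fin 4) ℤ) : ℤ := (blockC M * (blockD M)ᵀ) 0 0

/-- `β`, the (0,1) entry of `C·Dᵀ`. -/
def betaOf (M : Matrix (Fin 4) (Fin 4) ℤ) : ℤ := (blockC M * (blockD M)ᵀ) 0 1

/-- `γ`, the (1,1) entry of `C·Dᵀ`. -/
def gammaOf (M : Matrix (Fin 4) (Fin 4) ℤ) : ℤ := (blockC M * (blockD M)ᵀ) 1 1

/-- The character `χ(M) = (−1)^((α+β+γ)/2) ∈ {±1}`. -/
def chiOf (M : Matrix (Fin 4) (Fin 4) ℤ) : ℤˣ :=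
  (-1 : ℤˣ) ^ ((alphaOf M + betaOf M + gammaOf M) / 2)

lemma alpha_eq (M : Matrix (Fin 4) (Fin 4) ℤ) :
    alphaOf M = M 2 0 * M 2 2 + M 2 1 * M 2 3 := by
  simp [alphaOf, blockC, blockD, Matrix.mul_apply, Fin.sum_univ_two]

lemma beta_eq (M : Matrix (Fin 4) (Fin 4) ℤ) :
    betaOf M = M 2 0 * M 3 2 + M 2 1 * M 3 3 := by
  simp [betaOf, blockC, blockD, Matrix.mul_apply, Fin.sum_univ_two]

lemma gamma_eq (M : Matrix (Fin 4) (Fin 4) ℤ) :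
    gammaOf M = M 3 0 * M 3 2 + M 3 1 * M 3 3 := by
  simp [gammaOf, blockC, blockD, Matrix.mul_apply, Fin.sum_univ_two]

lemma key (M N : Matrix (Fin 4) (Fin 4) ℤ)
    (hM : ∀ i j, (2 : ℤ) ∣ (M i j - (1 : Matrix (Fin 4) (Fin 4) ℤ) i j))
    (hN : ∀ i j, (2 : ℤ) ∣ (N i j - (1 : Matrix (Fin 4) (Fin 4) ℤ) i j)) :
    (4 : ℤ) ∣ ((alphaOf (M*N) + betaOf (M*N) + gammaOf (M*N))
      - (alphaOf M + betaOf M + gammaOf M) - (alphaOf N + betaOf N + gammaOf N)) := by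
  obtain ⟨m20, hm20⟩ := hM 2 0
  have em20 : M 2 0 = 0 + 2 * m20 := by simp [Matrix.one_apply] at hm20; omega
  obtain ⟨m21, hm21⟩ := hM 2 1
  have em21 : M 2 1 = 0 + 2 * m21 := by simp [Matrix.one_apply] at hm21; omega
  obtain ⟨m22, hm22⟩ := hM 2 2
  have em22 : M 2 2 = 1 + 2 * m22 := by simp [Matrix.one_apply] at hm22; omega
  obtain ⟨m23, hm23⟩ := hM 2 3
  have em23 : M 2 3 = 0 + 2 * m23 := by simp [Matrix.one_apply] at hm23; omega
  obtain ⟨m30, hm30⟩ := hM 3 0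
  have em30 : M 3 0 = 0 + 2 * m30 := by simp [Matrix.one_apply] at hm30; omega
  obtain ⟨m31, hm31⟩ := hM 3 1
  have em31 : M 3 1 = 0 + 2 * m31 := by simp [Matrix.one_apply] at hm31; omega
  obtain ⟨m32, hm32⟩ := hM 3 2
  have em32 : M 3 2 = 0 + 2 * m32 := by simp [Matrix.one_apply] at hm32; omega
  obtain ⟨m33, hm33⟩ := hM 3 3
  have em33 : M 3 3 = 1 + 2 * m33 := by simp [Matrix.one_apply] at hm33; omega
  obtain ⟨n00, hn00⟩ := hN 0 0
  have en00 : N 0 0 = 1 + 2 * n00 := by simp [Matrix.one_apply] at hn00; omega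
  obtain ⟨n01, hn01⟩ := hN 0 1
  have en01 : N 0 1 = 0 + 2 * n01 := by simp [Matrix.one_apply] at hn01; omega
  obtain ⟨n02, hn02⟩ := hN 0 2
  have en02 : N 0 2 = 0 + 2 * n02 := by simp [Matrix.one_apply] at hn02; omega
  obtain ⟨n03, hn03⟩ := hN 0 3
  have en03 : N 0 3 = 0 + 2 * n03 := by simp [Matrix.one_apply] at hn03; omega
  obtain ⟨n10, hn10⟩ := hN 1 0
  have en10 : N 1 0 = 0 + 2 * n10 := by simp [Matrix.one_apply] at hn10; omega
  obtain ⟨n11, hn11⟩ := hN 1 1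
  have en11 : N 1 1 = 1 + 2 * n11 := by simp [Matrix.one_apply] at hn11; omega
  obtain ⟨n12, hn12⟩ := hN 1 2
  have en12 : N 1 2 = 0 + 2 * n12 := by simp [Matrix.one_apply] at hn12; omega
  obtain ⟨n13, hn13⟩ := hN 1 3
  have en13 : N 1 3 = 0 + 2 * n13 := by simp [Matrix.one_apply] at hn13; omega
  obtain ⟨n20, hn20⟩ := hN 2 0
  have en20 : N 2 0 = 0 + 2 * n20 := by simp [Matrix.one_apply] at hn20; omega
  obtain ⟨n21, hn21⟩ := hN 2 1
  have en21 : N 2 1 = 0 + 2 * n21 := by simp [Matrix.one_apply] at hn21; omega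
  obtain ⟨n22, hn22⟩ := hN 2 2
  have en22 : N 2 2 = 1 + 2 * n22 := by simp [Matrix.one_apply] at hn22; omega
  obtain ⟨n23, hn23⟩ := hN 2 3
  have en23 : N 2 3 = 0 + 2 * n23 := by simp [Matrix.one_apply] at hn23; omega
  obtain ⟨n30, hn30⟩ := hN 3 0
  have en30 : N 3 0 = 0 + 2 * n30 := by simp [Matrix.one_apply] at hn30; omega
  obtain ⟨n31, hn31⟩ := hN 3 1
  have en31 : N 3 1 = 0 + 2 * n31 := by simp [Matrix.one_apply] at hn31; omega
  obtain ⟨n32, hn32⟩ := hN 3 2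
  have en32 : N 3 2 = 0 + 2 * n32 := by simp [Matrix.one_apply] at hn32; omega
  obtain ⟨n33, hn33⟩ := hN 3 3
  have en33 : N 3 3 = 1 + 2 * n33 := by simp [Matrix.one_apply] at hn33; omega
  refine ⟨(4)*m20*m20*n00*n02 + (4)*m20*m20*n01*n03 + (2)*m20*m20*n02 + (4)*m20*m21*n00*n12 + (4)*m20*m21*n01*n13 + (4)*m20*m21*n02*n10 + (2)*m20*m21*n03 + (4)*m20*m21*n03*n11 + (2)*m20*m21*n12 + (2)*m20*m22*n00 + (4)*m20*m22*n00*n22 + (4)*m20*m22*n01*n23 + (4)*m20*m22*n02*n20 + (4)*m20*m22*n03*n21 + (2)*m20*m22*n22 + (4)*m20*m23*n00*n32 + (2)*m20*m23*n01 + (4)*m20*m23*n01*n33 + (4)*m20*m23*n02*n30 + (4)*m20*m23*n03*n31 + (2)*m20*m23*n32 + (4)*m20*m30*n00*n02 + (4)*m20*m30*n01*n03 + (2)*m20*m30*n02 + (4)*m20*m31*n00*n12 + (4)*m20*m31*n01*n13 + (2)*m20*m31*n12 + (2)*m20*m32*n00 + (4)*m20*m32*n00*n22 + (4)*m20*m32*n01*n23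 + (2)*m20*m32*n22 + (4)*m20*m33*n00*n32 + (2)*m20*m33*n01 + (4)*m20*m33*n01*n33 + (2)*m20*m33*n32 + m20*n00 + (2)*m20*n00*n22 + (2)*m20*n00*n32 + m20*n01 + (2)*m20*n01*n23 + (2)*m20*n01*n33 + (2)*m20*n02*n20 + (2)*m20*n03*n21 + m20*n22 + m20*n32 + (4)*m21*m21*n10*n12 + (4)*m21*m21*n11*n13 + (2)*m21*m21*n13 + (2)*m21*m22*n10 + (4)*m21*m22*n10*n22 + (4)*m21*m22*n11*n23 + (4)*m21*m22*n12*n20 + (4)*m21*m22*n13*n21 + (2)*m21*m22*n23 + (4)*m21*m23*n10*n32 + (2)*m21*m23*n11 + (4)*m21*m23*n11*n33 + (4)*m21*m23*n12*n30 + (4)*m21*m23*n13*n31 + (2)*m21*m23*n33 + (4)*m21*m30*n02*n10 + (2)*m21*m30*n03 + (4)*m21*m30*n03*n11 + (4)*m21*m31*n10*n12 + (4)*m21*m31*n11*n13 + (2)*m21*m31*n13 + (2)*m21*m32*n10 + (4)*m21*m32*n10*n22 + (4)*m21*m32*n11*n23 + (2)*m21*m32*n23 + (4)*m21*m33*n10*n32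 + (2)*m21*m33*n11 + (4)*m21*m33*n11*n33 + (2)*m21*m33*n33 + m21*n10 + (2)*m21*n10*n22 + (2)*m21*n10*n32 + m21*n11 + (2)*m21*n11*n23 + (2)*m21*n11*n33 + (2)*m21*n12*n20 + (2)*m21*n13*n21 + m21*n23 + m21*n33 + (2)*m22*m22*n20 + (4)*m22*m22*n20*n22 + (4)*m22*m22*n21*n23 + (4)*m22*m23*n20*n32 + (2)*m22*m23*n21 + (4)*m22*m23*n21*n33 + (4)*m22*m23*n22*n30 + (4)*m22*m23*n23*n31 + (2)*m22*m23*n30 + (4)*m22*m30*n02*n20 + (4)*m22*m30*n03*n21 + (4)*m22*m31*n12*n20 + (4)*m22*m31*n13*n21 + (2)*m22*m32*n20 + (4)*m22*m32*n20*n22 + (4)*m22*m32*n21*n23 + (4)*m22*m33*n20*n32 + (2)*m22*m33*n21 + (4)*m22*m33*n21*n33 + (2)*m22*n20 + (4)*m22*n20*n22 + (2)*m22*n20*n32 + m22*n21 + (4)*m22*n21*n23 + (2)*m22*n21*n33 + (4)*m23*m23*n30*n32 + (2)*m23*m23*n31 + (4)*m23*m23*n31*n33 + (4)*m23*m30*n02*n30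 + (4)*m23*m30*n03*n31 + (4)*m23*m31*n12*n30 + (4)*m23*m31*n13*n31 + (4)*m23*m32*n22*n30 + (4)*m23*m32*n23*n31 + (2)*m23*m32*n30 + (4)*m23*m33*n30*n32 + (2)*m23*m33*n31 + (4)*m23*m33*n31*n33 + (2)*m23*n20*n32 + m23*n21 + (2)*m23*n21*n33 + (2)*m23*n22*n30 + (2)*m23*n23*n31 + m23*n30 + (2)*m23*n30*n32 + m23*n31 + (2)*m23*n31*n33 + (4)*m30*m30*n00*n02 + (4)*m30*m30*n01*n03 + (2)*m30*m30*n02 + (4)*m30*m31*n00*n12 + (4)*m30*m31*n01*n13 + (4)*m30*m31*n02*n10 + (2)*m30*m31*n03 + (4)*m30*m31*n03*n11 + (2)*m30*m31*n12 + (2)*m30*m32*n00 + (4)*m30*m32*n00*n22 + (4)*m30*m32*n01*n23 + (4)*m30*m32*n02*n20 + (4)*m30*m32*n03*n21 + (2)*m30*m32*n22 + (4)*m30*m33*n00*n32 + (2)*m30*m33*n01 + (4)*m30*m33*n01*n33 + (4)*m30*m33*n02*n30 + (4)*m30*m33*n03*n31 + (2)*m30*m33*n32 + (2)*m30*n00*n32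 + m30*n01 + (2)*m30*n01*n33 + (2)*m30*n02*n20 + (2)*m30*n02*n30 + (2)*m30*n03*n21 + (2)*m30*n03*n31 + m30*n32 + (4)*m31*m31*n10*n12 + (4)*m31*m31*n11*n13 + (2)*m31*m31*n13 + (2)*m31*m32*n10 + (4)*m31*m32*n10*n22 + (4)*m31*m32*n11*n23 + (4)*m31*m32*n12*n20 + (4)*m31*m32*n13*n21 + (2)*m31*m32*n23 + (4)*m31*m33*n10*n32 + (2)*m31*m33*n11 + (4)*m31*m33*n11*n33 + (4)*m31*m33*n12*n30 + (4)*m31*m33*n13*n31 + (2)*m31*m33*n33 + (2)*m31*n10*n32 + m31*n11 + (2)*m31*n11*n33 + (2)*m31*n12*n20 + (2)*m31*n12*n30 + (2)*m31*n13*n21 + (2)*m31*n13*n31 + m31*n33 + (2)*m32*m32*n20 + (4)*m32*m32*n20*n22 + (4)*m32*m32*n21*n23 + (4)*m32*m33*n20*n32 + (2)*m32*m33*n21 + (4)*m32*m33*n21*n33 + (4)*m32*m33*n22*n30 + (4)*m32*m33*n23*n31 + (2)*m32*m33*n30 + m32*n20 + (2)*m32*n20*n22 + (2)*m32*n20*n32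 + m32*n21 + (2)*m32*n21*n23 + (2)*m32*n21*n33 + (2)*m32*n22*n30 + (2)*m32*n23*n31 + m32*n30 + (4)*m33*m33*n30*n32 + (2)*m33*m33*n31 + (4)*m33*m33*n31*n33 + (2)*m33*n20*n32 + m33*n21 + (2)*m33*n21*n33 + (4)*m33*n30*n32 + (2)*m33*n31 + (4)*m33*n31*n33, ?_⟩
  simp only [alpha_eq, beta_eq, gamma_eq, Matrix.mul_apply, Fin.sum_univ_four]
  rw [em20, em21, em22, em23, em30, em31, em32, em33, en00, en01, en02, en03, en10, en11, en12, en13, en20, en21, en22, en23, en30, en31, en32, en33]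
  ring

lemma evens (M : Matrix (Fin 4) (Fin 4) ℤ)
    (h : ∀ i j, (2 : ℤ) ∣ (M i j - (1 : Matrix (Fin 4) (Fin 4) ℤ) i j)) :
    2 ∣ alphaOf M ∧ 2 ∣ betaOf M ∧ 2 ∣ gammaOf M := by
  have h20 : (2:ℤ) ∣ M 2 0 := by have := h 2 0; simp [Matrix.one_apply] at this; omega
  have h21 : (2:ℤ) ∣ M 2 1 := by have := h 2 1; simp [Matrix.one_apply] at this; omega
  have h30 : (2:ℤ) ∣ M 3 0 := by have := h 3 0; simp [Matrix.one_apply] at this; omega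
  have h31 : (2:ℤ) ∣ M 3 1 := by have := h 3 1; simp [Matrix.one_apply] at this; omega
  refine ⟨?_, ?_, ?_⟩
  · rw [alpha_eq]; exact dvd_add (h20.mul_right _) (h21.mul_right _)
  · rw [beta_eq]; exact dvd_add (h20.mul_right _) (h21.mul_right _)
  · rw [gamma_eq]; exact dvd_add (h30.mul_right _) (h31.mul_right _)

lemma neg_one_zpow_congr {a b : ℤ} (h : 2 ∣ a - b) : (-1 : ℤˣ) ^ a = (-1 : ℤˣ) ^ b := by
  obtain ⟨k, hk⟩ := h
  have : a = b + 2 * k := by omega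
  rw [this, _root_.zpow_add, _root_.zpow_mul, show ((-1:ℤˣ))^(2:ℤ) = 1 by decide, _root_.one_zpow, mul_one]

/-- For `M ∈ Γ₂[2]` the entries `α, β, γ` of `C·Dᵀ` are even; the map
`χ(M) = (−1)^((α+β+γ)/2)` is multiplicative on `Γ₂[2]` and takes both values
`1` and `−1`, so its kernel is a subgroup of index two of `Γ₂[2]`. -/
theorem stmt_3 :
    (∀ M, InGamma2Two M → (2 ∣ alphaOf M ∧ 2 ∣ betaOf M ∧ 2 ∣ gammaOf M)) ∧
    (∀ M N, InGamma2Two M → InGamma2Two N → chiOf (M * N) = chiOf M * chiOf N) ∧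
    (∃ M, InGamma2Two M ∧ chiOf M = 1) ∧ (∃ M, InGamma2Two M ∧ chiOf M = -1) := by
  refine ⟨fun M hM => evens M hM.2, ?_, ?_, ?_⟩
  · intro M N hM hN
    have h4 := key M N hM.2 hN.2
    obtain ⟨ha1, ha2, ha3⟩ := evens M hM.2
    obtain ⟨hb1, hb2, hb3⟩ := evens N hN.2
    unfold chiOf
    rw [← _root_.zpow_add]
    apply neg_one_zpow_congr
    omega
  · exact ⟨1, ⟨by unfold IsSp4Z; decide, by decide⟩, by decide⟩
  · refine ⟨!![1,0,0,0; 0,1,0,0; 2,0,1,0; 0,0,0,1], ⟨by unfold IsSp4Z; decide, by decide⟩, by decide⟩
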